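/- Let I ⊆ ℝ be an interval, (X, x_0) a based metric space, Φ a symmetric norm, and S : I → S_Φ(X, x_0) a continuous map whose rank is bounded by n (i.e., rank S(t) ≤ n for all t). Then there exist n continuous maps λ_1, ..., λ_n : I → X such that S(t) = {λ_1(t), ..., λ_n(t)}* for all t ∈ I. -/

import Mathlib

open Filter

/-- A symmetric norm: a norm on the space `c_00` of finitely supported real
sequences (modelled as `ℕ →₀ ℝ`), normalised by `Φ(1,0,0,…) = 1`, and invariant
under permutations of the entries and under replacing entries by their absolute
values. -/
structure SymmetricNorm where
  toFun : (ℕ →₀ ℝ) → ℝ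
  nonneg : ∀ ξ, 0 ≤ toFun ξ
  eq_zero : ∀ ξ, toFun ξ = 0 → ξ = 0
  add_le : ∀ ξ η, toFun (ξ + η) ≤ toFun ξ + toFun η
  smul_eq : ∀ (c : ℝ) (ξ), toFun (c • ξ) = |c| * toFun ξ
  norm_single : toFun (Finsupp.single 0 1) = 1
  perm_invariant : ∀ (π : Equiv.Perm ℕ) (ξ), toFun (Finsupp.equivMapDomain π ξ) = toFun ξ
  abs_invariant : ∀ (ξ : ℕ →₀ ℝ), toFun (Finsupp.mapRange (fun a => |a|) abs_zero ξ) = toFun ξ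

/-- The truncation `(ξ_0, …, ξ_{n-1}, 0, 0, …)` of a sequence, as an element of `c_00`. -/
noncomputable def truncF (ξ : ℕ → ℝ) (n : ℕ) : ℕ →₀ ℝ :=
  ∑ i ∈ Finset.range n, Finsupp.single i (ξ i)

/-- The extension of a symmetric norm to sequences: `Φ(ξ) = lim_n Φ(ξ_0,…,ξ_{n-1},0,0,…)`. -/
noncomputable def SymmetricNorm.ext (Φ : SymmetricNorm) (ξ : ℕ → ℝ) : ℝ :=
  limUnder atTop fun n => Φ.toFun (truncF ξ n)

/-- Membership in the natural domain `ℓ_Φ`: the sequence tends to `0` and the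
`Φ`-norms of its truncations converge. -/
def MemLPhi (Φ : SymmetricNorm) (ξ : ℕ → ℝ) : Prop :=
  Tendsto ξ atTop (nhds 0) ∧ ∃ L, Tendsto (fun n => Φ.toFun (truncF ξ n)) atTop (nhds L)

/-- Membership in `ℓ_Φ^+`: nonnegative `Φ`-summable sequences. -/
def MemLPhiPlus (Φ : SymmetricNorm) (ξ : ℕ → ℝ) : Prop :=
  (∀ i, 0 ≤ ξ i) ∧ MemLPhi Φ ξ

/-- A symmetric norm is regular if `Φ(ξ_{n+1}, ξ_{n+2}, …) → 0` for every `ξ ∈ ℓ_Φ`. -/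
def SymmetricNorm.Regular (Φ : SymmetricNorm) : Prop :=
  ∀ ξ : ℕ → ℝ, MemLPhi Φ ξ →
    Tendsto (fun n => Φ.ext fun i => ξ (n + i)) atTop (nhds 0)

/-- `partialMax ξ k` is the supremum of sums of `k` distinct entries of `ξ`;
for nonnegative `ξ ∈ c_0` this equals `ξ^↓_1 + ⋯ + ξ^↓_k`. -/
noncomputable def partialMax (ξ : ℕ → ℝ) (k : ℕ) : ℝ :=
  sSup ((fun s : Finset ℕ => ∑ i ∈ s, ξ i) '' {s | s.card = k})

/-- The nonincreasing rearrangement `ξ^↓` of a (nonnegative, null) sequence,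
defined via `ξ^↓_1 = max ξ_i`, `ξ^↓_1 + ξ^↓_2 = max_{i ≠ j} (ξ_i + ξ_j)`, …. -/
noncomputable def decRearr (ξ : ℕ → ℝ) (k : ℕ) : ℝ :=
  partialMax ξ (k + 1) - partialMax ξ k
open scoped Classical

variable {X : Type*} [MetricSpace X]

/-- `s : ℕ → X` is an enumeration of the countable multiset `S` in `(X, x₀)`:
every point other than the basepoint occurs in `s` exactly according to its
multiplicity in `S`. -/
def IsEnum (x0 : X) (S : X → ℕ∞) (s : ℕ → X) : Prop :=
  ∀ x, x ≠ x0 → S x = {i : ℕ | s i = x}.encard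

/-- A countable multiset in `(X, x₀)`: a multiplicity function in which the
basepoint is the only point of infinite multiplicity and whose support is
countable. -/
def IsCMultiset (x0 : X) (S : X → ℕ∞) : Prop :=
  S x0 = ⊤ ∧ (∀ x, x ≠ x0 → S x ≠ ⊤) ∧ {x | S x ≠ 0}.Countable

/-- Membership in `S_Φ(X, x₀)`: a countable multiset whose points `s_i` satisfy
`(d(x₀, s_i))_i ∈ ℓ_Φ`. -/
def MemSPhi (Φ : SymmetricNorm) (x0 : X) (S : X → ℕ∞) : Prop :=
  IsCMultiset x0 S ∧ ∃ s : ℕ → X, IsEnum x0 S s ∧ MemLPhi Φ fun i => dist x0 (s i)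

/-- The distance `d_Φ(S, T)`: the infimum over pairs of enumerations `(s_i), (t_i)`
of `S, T` of `Φ(d(s_1,t_1), d(s_2,t_2), …)`. -/
noncomputable def dPhi (Φ : SymmetricNorm) (x0 : X) (S T : X → ℕ∞) : ℝ :=
  sInf {r | ∃ s t : ℕ → X, IsEnum x0 S s ∧ IsEnum x0 T t ∧
    MemLPhi Φ (fun i => dist (s i) (t i)) ∧ r = Φ.ext fun i => dist (s i) (t i)}

/-- The sum of two multisets (addition of multiplicities away from the basepoint). -/
noncomputable def msum (x0 : X) (S T : X → ℕ∞) : X → ℕ∞ := fun x => if x = x0 then ⊤ else S x + T x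

/-- The difference of two multisets (subtraction of multiplicities away from the
basepoint). -/
noncomputable def mdiff (x0 : X) (S T : X → ℕ∞) : X → ℕ∞ := fun x => if x = x0 then ⊤ else S x - T x

/-- The intersection of a multiset with a subset `V ⊆ X`. -/
noncomputable def minter (x0 : X) (S : X → ℕ∞) (V : Set X) : X → ℕ∞ :=
  fun x => if x = x0 then ⊤ else if x ∈ V then S x else 0

/-- The multiset `S` has rank `n`: its total multiplicity away from the basepoint
is `n`, i.e. its non-basepoint part can be listed by a tuple of length `n`. -/
def HasRank (x0 : X) (S : X → ℕ∞) (n : ℕ) : Prop :=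
  ∃ f : Fin n → X, (∀ i, f i ≠ x0) ∧ ∀ x, x ≠ x0 → S x = {i : Fin n | f i = x}.encard

section Helpers

lemma truncF_apply (ξ : ℕ → ℝ) (m i : ℕ) : truncF ξ m i = if i < m then ξ i else 0 := by
  classical
  unfold truncF
  rw [Finset.sum_apply']
  simp only [Finsupp.single_apply]
  rw [Finset.sum_ite_eq' (Finset.range m) i ξ]
  simp [Finset.mem_range]

lemma phi_single (Φ : SymmetricNorm) (j : ℕ) (c : ℝ) :
    Φ.toFun (Finsupp.single j c) = |c| := by
  have h1 : Finsupp.single j c = Finsupp.equivMapDomain (Equiv.swap 0 j) (Finsupp.single 0 c) := by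
    rw [Finsupp.equivMapDomain_single, Equiv.swap_apply_left]
  have h2 : (Finsupp.single 0 c : ℕ →₀ ℝ) = c • Finsupp.single 0 1 := by
    rw [Finsupp.smul_single, smul_eq_mul, mul_one]
  rw [h1, Φ.perm_invariant, h2, Φ.smul_eq, Φ.norm_single, mul_one]

lemma phi_mono (Φ : SymmetricNorm) (ξ η : ℕ →₀ ℝ) (h0 : ∀ i, 0 ≤ ξ i) (h1 : ∀ i, ξ i ≤ η i) :
    Φ.toFun ξ ≤ Φ.toFun η := by
  classical
  have key : ∀ s : Finset ℕ, ∀ ξ η : ℕ →₀ ℝ, (∀ i, 0 ≤ ξ i) → (∀ i, ξ i ≤ η i) →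
      (∀ i, ξ i ≠ η i → i ∈ s) → Φ.toFun ξ ≤ Φ.toFun η := by
    intro s
    induction s using Finset.induction_on with
    | empty =>
      intro ξ η _ _ hd
      have : ξ = η := Finsupp.ext fun i => by
        by_contra hne; exact absurd (hd i hne) (Finset.notMem_empty i)
      rw [this]
    | @insert a s ha ih =>
      intro ξ η h0 h1 hd
      set ζ := Finsupp.update η a (ξ a) with hζ
      have hζapp : ∀ i, ζ i = if i = a then ξ a else η i := by
        intro i
        rw [hζ]
        rw [Finsupp.coe_update]
        by_cases hi : i = a
        · subst hi; simp
        · simp [Function.update_apply, hi]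
      have step1 : Φ.toFun ξ ≤ Φ.toFun ζ := by
        apply ih ξ ζ h0
        · intro i; rw [hζapp]; by_cases hi : i = a
          · simp [hi]
          · simp [hi]; exact h1 i
        · intro i hne
          have hia : i ≠ a := by
            intro hh; subst hh; rw [hζapp] at hne; simp at hne
          have : ξ i ≠ η i := by rw [hζapp] at hne; simpa [hia] using hne
          have := hd i this
          rcases Finset.mem_insert.1 this with h | h
          · exact absurd h hia
          · exact h
      have step2 : Φ.toFun ζ ≤ Φ.toFun η := by
        set c := ξ a with hc
        set d := η a with hdd
        have hc0 : 0 ≤ c := h0 a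
        have hcd : c ≤ d := h1 a
        rcases eq_or_lt_of_le (hc0.trans hcd) with hzero | hpos
        · -- d = 0, so c = 0, ζ = η
          have hceq : c = 0 := le_antisymm (hcd.trans hzero.symm.le) hc0
          have : ζ = η := by
            apply Finsupp.ext; intro i; rw [hζapp]
            by_cases hi : i = a
            · simp [hi, hceq, ← hzero, ← hdd]
            · simp [hi]
          rw [this]
        · set η' := Finsupp.update η a (-d) with hη'
          have hη'app : ∀ i, η' i = if i = a then -d else η i := by
            intro i; rw [hη', Finsupp.coe_update]
            by_cases hi : i = a
            · subst hi; simp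
            · simp [Function.update_apply, hi]
          have hΦη' : Φ.toFun η' = Φ.toFun η := by
            rw [← Φ.abs_invariant η', ← Φ.abs_invariant η]
            congr 1
            apply Finsupp.ext; intro i
            rw [Finsupp.mapRange_apply, Finsupp.mapRange_apply, hη'app]
            by_cases hi : i = a
            · simp [hi, ← hdd, abs_neg]
            · simp [hi]
          have hrep : ζ = ((d + c) / (2 * d)) • η + ((d - c) / (2 * d)) • η' := by
            apply Finsupp.ext; intro i
            rw [Finsupp.add_apply, Finsupp.smul_apply, Finsupp.smul_apply, hζapp, hη'app]
            by_cases hi : i = a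
            · simp only [hi, if_pos]
              rw [smul_eq_mul, smul_eq_mul, ← hdd]
              field_simp
              ring
            · simp only [hi, if_neg, if_neg hi, ↓reduceIte]
              rw [smul_eq_mul, smul_eq_mul]
              have hd0 : d ≠ 0 := ne_of_gt hpos
              field_simp
              ring
          rw [hrep]
          calc Φ.toFun (((d + c) / (2 * d)) • η + ((d - c) / (2 * d)) • η')
              ≤ Φ.toFun (((d + c) / (2 * d)) • η) + Φ.toFun (((d - c) / (2 * d)) • η') :=
                Φ.add_le _ _
            _ = |(d + c) / (2 * d)| * Φ.toFun η + |(d - c) / (2 * d)| * Φ.toFun η' := by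
                rw [Φ.smul_eq, Φ.smul_eq]
            _ = ((d + c) / (2 * d)) * Φ.toFun η + ((d - c) / (2 * d)) * Φ.toFun η := by
                rw [hΦη', abs_of_nonneg, abs_of_nonneg]
                · apply div_nonneg (by linarith) (by linarith)
                · apply div_nonneg (by linarith) (by linarith)
            _ = Φ.toFun η := by field_simp; ring
      exact step1.trans step2
  apply key (ξ.support ∪ η.support) ξ η h0 h1
  intro i hne
  rw [Finset.mem_union, Finsupp.mem_support_iff, Finsupp.mem_support_iff]
  by_contra hcon
  push_neg at hcon
  exact hne (by rw [hcon.1, hcon.2])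

lemma ext_ge (Φ : SymmetricNorm) (ξ : ℕ → ℝ) (h0 : ∀ i, 0 ≤ ξ i) (L : ℝ)
    (hL : Tendsto (fun m => Φ.toFun (truncF ξ m)) atTop (nhds L)) (j : ℕ) : ξ j ≤ L := by
  apply ge_of_tendsto hL
  filter_upwards [eventually_ge_atTop (j + 1)] with m hm
  have hmono : Φ.toFun (Finsupp.single j (ξ j)) ≤ Φ.toFun (truncF ξ m) := by
    apply phi_mono
    · intro i
      rw [Finsupp.single_apply]
      by_cases hij : j = i
      · simp [hij]; exact h0 i
      · simp [hij]
    · intro i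
      rw [Finsupp.single_apply, truncF_apply]
      by_cases hij : j = i
      · subst hij; simp [if_pos (by omega : j < m)]
      · simp [hij]
        by_cases him : i < m
        · simp [him]; exact h0 i
        · simp [him]
  rw [phi_single, abs_of_nonneg (h0 j)] at hmono
  exact hmono


-- BIJ lemma
lemma exists_matchFn {ι κ Y : Type*} [DecidableEq ι] [DecidableEq κ] [DecidableEq Y] [Nonempty κ] :
    ∀ (A : Finset ι) (B : Finset κ) (u : ι → Y) (v : κ → Y),
      Multiset.map u A.val = Multiset.map v B.val →
      ∃ φ : ι → κ, Set.BijOn φ ↑A ↑B ∧ ∀ i ∈ A, v (φ i) = u i := by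
  intro A
  induction A using Finset.induction_on with
  | empty =>
    intro B u v h
    have hB : B = ∅ := by
      have := h.symm
      rw [Finset.empty_val, Multiset.map_zero, Multiset.map_eq_zero] at this
      exact Finset.val_eq_zero.1 this
    subst hB
    refine ⟨fun _ => Classical.arbitrary κ, ?_, ?_⟩
    · simp only [Finset.coe_empty]
      exact ⟨fun x hx => absurd hx (Set.notMem_empty x),
        fun x hx => absurd hx (Set.notMem_empty x),
        fun x hx => absurd hx (Set.notMem_empty x)⟩
    · intro i hi; exact absurd hi (Finset.notMem_empty i)
  | @insert a A ha ih =>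
    intro B u v h
    rw [Finset.insert_val_of_notMem ha, Multiset.map_cons] at h
    have hmem : u a ∈ Multiset.map v B.val := by rw [← h]; exact Multiset.mem_cons_self _ _
    obtain ⟨b, hbB, hvb⟩ := Multiset.mem_map.1 hmem
    have hbB' : b ∈ B := hbB
    have h2 : Multiset.map u A.val = Multiset.map v (B.erase b).val := by
      rw [Finset.erase_val, Multiset.map_erase_of_mem v B.val hbB, hvb]
      rw [← h, Multiset.erase_cons_head]
    obtain ⟨φ', hbij', hval'⟩ := ih (B.erase b) u v h2
    refine ⟨fun i => if i = a then b else φ' i, ?_, ?_⟩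
    · constructor
      · -- MapsTo
        intro i hi
        simp only [Finset.coe_insert, Set.mem_insert_iff, Finset.mem_coe] at hi
        by_cases hia : i = a
        · simp [hia, hbB']
        · rcases hi with hi | hi
          · exact absurd hi hia
          · simp only [if_neg hia]
            have := hbij'.1 hi
            simp only [Finset.coe_erase, Set.mem_diff, Finset.mem_coe] at this
            exact this.1
      constructor
      · -- InjOn
        intro i hi i' hi' heq
        simp only [Finset.coe_insert, Set.mem_insert_iff, Finset.mem_coe] at hi hi'
        by_cases hia : i = a <;> by_cases hia' : i' = a
        · rw [hia, hia']
        · exfalso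
          have hi'A : i' ∈ A := by tauto
          simp only [if_pos hia, if_neg hia'] at heq
          have := hbij'.1 hi'A
          simp only [Finset.coe_erase, Set.mem_diff, Finset.mem_coe] at this
          exact this.2 (by simp [← heq])
        · exfalso
          have hiA : i ∈ A := by tauto
          simp only [if_neg hia, if_pos hia'] at heq
          have := hbij'.1 hiA
          simp only [Finset.coe_erase, Set.mem_diff, Finset.mem_coe] at this
          exact this.2 (by simp [heq])
        · have hiA : i ∈ A := by tauto
          have hi'A : i' ∈ A := by tauto
          simp only [if_neg hia, if_neg hia'] at heq
          exact hbij'.2.1 hiA hi'A heq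
      · -- SurjOn
        intro c hc
        simp only [Finset.mem_coe] at hc
        by_cases hcb : c = b
        · exact ⟨a, by simp [Finset.coe_insert], by simp [hcb]⟩
        · have hce : c ∈ B.erase b := Finset.mem_erase.2 ⟨hcb, hc⟩
          obtain ⟨i, hiA, hieq⟩ := hbij'.2.2 (by simp only [Finset.coe_erase]; exact Set.mem_diff_singleton.2 ⟨hc, hcb⟩)
          have hiA' : i ∈ A := hiA
          have hia : i ≠ a := fun hh => ha (hh ▸ hiA')
          refine ⟨i, by simp [Finset.coe_insert, hiA'], ?_⟩
          simp only [if_neg hia]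
          exact hieq
    · intro i hi
      rcases Finset.mem_insert.1 hi with hi | hi
      · simp [hi, hvb]
      · have hia : i ≠ a := fun hh => ha (hh ▸ hi)
        simp [if_neg hia, hval' i hi]

-- extend partial injection to permutation
lemma perm_extend {n : ℕ} (D : Finset (Fin n)) (m : Fin n → Fin n) (hm : Set.InjOn m ↑D) :
    ∃ σ : Equiv.Perm (Fin n), ∀ i ∈ D, σ i = m i := by
  classical
  set E := D.image m with hE
  have hcard : D.card = E.card := (Finset.card_image_of_injOn hm).symm
  have hbj : Function.Bijective (fun x : {x // x ∈ D} => (⟨m x.1, Finset.mem_image_of_mem m x.2⟩ : {x // x ∈ E})) := by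
    rw [Fintype.bijective_iff_injective_and_card]
    constructor
    · intro x y hxy
      have : m x.1 = m y.1 := congrArg Subtype.val hxy
      exact Subtype.ext (hm x.2 y.2 this)
    · simp [hcard]
  obtain ⟨e1, he1⟩ : ∃ e1 : {x // x ∈ D} ≃ {x // x ∈ E}, ∀ x, (e1 x).1 = m x.1 :=
    ⟨Equiv.ofBijective _ hbj, fun x => rfl⟩
  have e2 : {x // x ∈ Dᶜ} ≃ {x // x ∈ Eᶜ} := by
    apply Finset.equivOfCardEq
    rw [Finset.card_compl, Finset.card_compl, hcard]
  have e2' : {x // ¬ x ∈ D} ≃ {x // ¬ x ∈ E} :=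
    (Equiv.subtypeEquivRight (fun x => (Finset.mem_compl).symm)).trans
      (e2.trans (Equiv.subtypeEquivRight fun x => Finset.mem_compl))
  set σ : Equiv.Perm (Fin n) :=
    (Equiv.sumCompl (· ∈ D)).symm.trans ((e1.sumCongr e2').trans (Equiv.sumCompl (· ∈ E)))
  refine ⟨σ, fun i hi => ?_⟩
  show (Equiv.sumCompl (· ∈ E)) ((e1.sumCongr e2') ((Equiv.sumCompl (· ∈ D)).symm i)) = m i
  rw [Equiv.sumCompl_symm_apply_of_pos (p := (· ∈ D)) hi]
  rw [Equiv.sumCongr_apply, Sum.map_inl, Equiv.sumCompl_apply_inl]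
  exact he1 ⟨i, hi⟩

end Helpers

section Helpers2
variable (x0 : X)

lemma fiber_encard_eq_card {n : ℕ} [DecidableEq X] (f : Fin n → X) (x : X) :
    {i : Fin n | f i = x}.encard = ((Finset.univ.filter (fun i => f i = x)).card : ℕ∞) := by
  rw [← Set.encard_coe_eq_coe_finsetCard]
  congr 1
  ext i
  simp

lemma exists_close_perm {n : ℕ} (f g : Fin n → X) (s t : ℕ → X) (ε : ℝ) (hε : 0 < ε)
    (hf : ∀ x, x ≠ x0 → {i : Fin n | f i = x}.encard = {j : ℕ | s j = x}.encard)
    (hg : ∀ x, x ≠ x0 → {i : Fin n | g i = x}.encard = {j : ℕ | t j = x}.encard)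
    (hd : ∀ j, dist (s j) (t j) < ε) :
    ∃ σ : Equiv.Perm (Fin n), ∀ i, dist (f i) (g (σ i)) < 2 * ε := by
  classical
  rcases Nat.eq_zero_or_pos n with hn | hn
  · subst hn; exact ⟨Equiv.refl _, fun i => i.elim0⟩
  have hnee : Nonempty (Fin n) := ⟨⟨0, hn⟩⟩
  -- finiteness of the nonbase parts of the enumerations
  have hfinEnum : ∀ (h : Fin n → X) (e : ℕ → X),
      (∀ x, x ≠ x0 → {i : Fin n | h i = x}.encard = {j : ℕ | e j = x}.encard) →
      {j : ℕ | e j ≠ x0}.Finite := by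
    intro h e hh
    have hsub : {j : ℕ | e j ≠ x0} ⊆ ⋃ i : Fin n, {j | e j = h i ∧ h i ≠ x0} := by
      intro j hj
      have hx : e j ≠ x0 := hj
      have h1 : {i : Fin n | h i = e j}.encard = {j' : ℕ | e j' = e j}.encard := hh (e j) hx
      have h2 : {j' : ℕ | e j' = e j}.encard ≠ 0 := by
        rw [Set.encard_ne_zero]; exact ⟨j, rfl⟩
      rw [← h1, Set.encard_ne_zero] at h2
      obtain ⟨i, hi⟩ := h2
      exact Set.mem_iUnion.2 ⟨i, ⟨hi.symm ▸ rfl, hi ▸ hx⟩⟩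
    apply Set.Finite.subset _ hsub
    apply Set.finite_iUnion
    intro i
    by_cases hx : h i = x0
    · convert Set.finite_empty
      ext j; simp [hx]
    · have hss : {j : ℕ | e j = h i ∧ h i ≠ x0} ⊆ {j : ℕ | e j = h i} := fun j hj => hj.1
      apply Set.Finite.subset _ hss
      have h1 := (hh (h i) hx).symm
      have h2 : {i' : Fin n | h i' = h i}.Finite := Set.toFinite _
      rw [← Set.encard_lt_top_iff] at h2 ⊢
      rwa [h1]
  have hsfin := hfinEnum f s hf
  have htfin := hfinEnum g t hg
  set Bf : Finset (Fin n) := Finset.univ.filter (fun i => f i ≠ x0) with hBf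
  set Bg : Finset (Fin n) := Finset.univ.filter (fun i => g i ≠ x0) with hBg
  set Bs : Finset ℕ := hsfin.toFinset with hBs
  set Bt : Finset ℕ := htfin.toFinset with hBt
  -- multiset equality
  have hmult : ∀ (h : Fin n → X) (e : ℕ → X),
      (∀ x, x ≠ x0 → {i : Fin n | h i = x}.encard = {j : ℕ | e j = x}.encard) →
      ∀ (he : {j : ℕ | e j ≠ x0}.Finite),
      Multiset.map h (Finset.univ.filter (fun i => h i ≠ x0)).val =
        Multiset.map e he.toFinset.val := by
    intro h e hh he
    apply Multiset.ext.2
    intro x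
    rw [Multiset.count_map, Multiset.count_map]
    rw [← Finset.filter_val, ← Finset.filter_val, Finset.filter_filter]
    simp only [← Finset.card_def]
    by_cases hx : x = x0
    · subst hx
      rw [Finset.card_eq_zero.2, Finset.card_eq_zero.2]
      · apply Finset.filter_eq_empty_iff.2
        intro j hj
        rw [Set.Finite.mem_toFinset he] at hj
        intro hc; exact hj hc.symm
      · apply Finset.filter_eq_empty_iff.2
        intro i _
        simp only [not_and]
        intro h1 h2; exact h1 h2.symm
    · have e1 : (Finset.univ.filter (fun a => h a ≠ x0 ∧ x = h a)) =
          (Finset.univ.filter (fun i => h i = x)) := by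
        ext i
        simp only [Finset.mem_filter, Finset.mem_univ, true_and]
        constructor
        · rintro ⟨-, h2⟩; exact h2.symm
        · intro h1; exact ⟨by rw [h1]; exact hx, h1.symm⟩
      have e2 : (he.toFinset.filter (fun a => x = e a)) =
          (he.toFinset.filter (fun a => e a = x)) := by
        ext j; simp only [Finset.mem_filter]; rw [eq_comm]
      rw [e1, e2]
      have h3 : {j : ℕ | e j = x} = ↑(he.toFinset.filter (fun a => e a = x)) := by
        ext j
        simp only [Finset.coe_filter, Set.mem_setOf_eq, Set.Finite.mem_toFinset he]
        constructor
        · intro hj; exact ⟨by rw [hj]; exact hx, hj⟩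
        · intro hj; exact hj.2
      have h4 := hh x hx
      rw [fiber_encard_eq_card, h3, Set.encard_coe_eq_coe_finsetCard] at h4
      exact_mod_cast h4
  have hms := hmult f s hf hsfin
  have hmt := hmult g t hg htfin
  -- value-preserving bijections
  obtain ⟨φ, hφbij, hφval⟩ := exists_matchFn Bf Bs f s hms
  obtain ⟨ψ, hψbij, hψval⟩ := exists_matchFn Bt Bg t g hmt.symm
  -- the partial injection
  set dom : Finset (Fin n) := Bf.filter (fun i => t (φ i) ≠ x0) with hdom
  have hmInj : Set.InjOn (fun i => ψ (φ i)) ↑dom := by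
    intro i hi i' hi' heq
    simp only [hdom, Finset.coe_filter, Set.mem_setOf_eq] at hi hi'
    have hφiBt : φ i ∈ Bt := by rw [hBt, Set.Finite.mem_toFinset]; exact hi.2
    have hφi'Bt : φ i' ∈ Bt := by rw [hBt, Set.Finite.mem_toFinset]; exact hi'.2
    have h1 : φ i = φ i' := hψbij.2.1 hφiBt hφi'Bt heq
    exact hφbij.2.1 hi.1 hi'.1 h1
  obtain ⟨σ, hσ⟩ := perm_extend dom (fun i => ψ (φ i)) hmInj
  refine ⟨σ, fun i => ?_⟩
  by_cases hidom : i ∈ dom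
  · -- directly matched pair
    have h1 : σ i = ψ (φ i) := hσ i hidom
    rw [hdom, Finset.mem_filter] at hidom
    obtain ⟨hiBf, hti⟩ := hidom
    have h2 : f i = s (φ i) := (hφval i hiBf).symm
    have hφiBt : φ i ∈ Bt := by rw [hBt, Set.Finite.mem_toFinset]; exact hti
    have h3 : g (σ i) = t (φ i) := by rw [h1]; exact hψval (φ i) hφiBt
    rw [h2, h3]
    have := hd (φ i)
    linarith
  · -- unmatched: both sides near the basepoint
    have claim1 : dist (f i) x0 < ε := by
      by_cases hiBf : i ∈ Bf
      · have hti : t (φ i) = x0 := by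
          by_contra hc
          exact hidom (Finset.mem_filter.2 ⟨hiBf, hc⟩)
        have h2 : f i = s (φ i) := (hφval i hiBf).symm
        rw [h2, ← hti]
        exact hd (φ i)
      · have : f i = x0 := by
          rw [hBf, Finset.mem_filter] at hiBf
          push_neg at hiBf
          exact hiBf (Finset.mem_univ i)
        rw [this, dist_self]; exact hε
    have claim2 : dist x0 (g (σ i)) < ε := by
      by_cases hσiBg : σ i ∈ Bg
      · -- σ i = ψ j for some j ∈ Bt with s j = x0
        obtain ⟨j, hjBt, hjeq⟩ := hψbij.2.2 (by simpa using hσiBg)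
        have hjBt' : j ∈ Bt := hjBt
        have hsj : s j = x0 := by
          by_contra hsj
          -- then j ∈ Bs, so j = φ i' for some i' ∈ Bf with i' ∈ dom, contradiction
          have hjBs : j ∈ Bs := by rw [hBs, Set.Finite.mem_toFinset]; exact hsj
          obtain ⟨i', hi'Bf, hi'eq⟩ := hφbij.2.2 (by simpa using hjBs)
          have hi'Bf' : i' ∈ Bf := hi'Bf
          have hti' : t (φ i') ≠ x0 := by
            rw [hi'eq]
            rw [hBt, Set.Finite.mem_toFinset] at hjBt'
            exact hjBt'
          have hi'dom : i' ∈ dom := Finset.mem_filter.2 ⟨hi'Bf', hti'⟩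
          have : σ i' = σ i := by rw [hσ i' hi'dom]; simp only [hi'eq, hjeq]
          have : i' = i := σ.injective this
          exact hidom (this ▸ hi'dom)
        have h3 : g (σ i) = t j := by rw [← hjeq]; exact hψval j hjBt'
        rw [h3, ← hsj]
        exact hd j
      · have : g (σ i) = x0 := by
          rw [hBg, Finset.mem_filter] at hσiBg
          push_neg at hσiBg
          exact hσiBg (Finset.mem_univ (σ i))
        rw [this, dist_self]; exact hε
    calc dist (f i) (g (σ i)) ≤ dist (f i) x0 + dist x0 (g (σ i)) := dist_triangle _ _ _
      _ < 2 * ε := by linarith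

end Helpers2

section Helpers3
variable (x0 : X)

lemma hasRank_enum {k : ℕ} {S : X → ℕ∞} (h : HasRank x0 S k) :
    ∃ s : ℕ → X, IsEnum x0 S s ∧ ∀ j, j ≥ k → s j = x0 := by
  obtain ⟨f, hf0, hf⟩ := h
  refine ⟨fun j => if hj : j < k then f ⟨j, hj⟩ else x0, ?_, ?_⟩
  · intro x hx
    rw [hf x hx]
    have hset : {j : ℕ | (if hj : j < k then f ⟨j, hj⟩ else x0) = x} =
        (fun i : Fin k => (i : ℕ)) '' {i : Fin k | f i = x} := by
      ext j
      simp only [Set.mem_setOf_eq, Set.mem_image]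
      constructor
      · intro hj
        by_cases hlt : j < k
        · rw [dif_pos hlt] at hj; exact ⟨⟨j, hlt⟩, hj, rfl⟩
        · rw [dif_neg hlt] at hj; exact absurd hj.symm hx
      · rintro ⟨i, hfi, rfl⟩
        rw [dif_pos i.isLt]
        simpa using hfi
    rw [hset, Set.InjOn.encard_image (fun a _ b _ hab => Fin.val_injective hab)]
  · intro j hj
    show (if hj : j < k then f ⟨j, hj⟩ else x0) = x0
    rw [dif_neg (by omega : ¬ j < k)]

lemma dPhi_lt_imp (Φ : SymmetricNorm) {S T : X → ℕ∞} {kS kT : ℕ}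
    (hS : HasRank x0 S kS) (hT : HasRank x0 T kT) {ε : ℝ} (hε : 0 < ε)
    (h : dPhi Φ x0 S T < ε) :
    ∃ s t : ℕ → X, IsEnum x0 S s ∧ IsEnum x0 T t ∧ ∀ j, dist (s j) (t j) < ε := by
  obtain ⟨s0, hs0, hs0v⟩ := hasRank_enum x0 hS
  obtain ⟨t1, ht1, ht1v⟩ := hasRank_enum x0 hT
  set t0 : ℕ → X := fun j => if j < kS then x0 else t1 (j - kS) with ht0
  have ht0enum : IsEnum x0 T t0 := by
    intro x hx
    rw [ht1 x hx]
    have hset : {j : ℕ | t0 j = x} = (fun j => j + kS) '' {j : ℕ | t1 j = x} := by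
      ext j
      simp only [ht0, Set.mem_setOf_eq, Set.mem_image]
      constructor
      · intro hj
        by_cases hlt : j < kS
        · rw [if_pos hlt] at hj; exact absurd hj.symm hx
        · rw [if_neg hlt] at hj; exact ⟨j - kS, hj, by omega⟩
      · rintro ⟨i, hfi, rfl⟩
        rw [if_neg (by omega)]
        simpa using hfi
    rw [hset, Set.InjOn.encard_image (fun a _ b _ hab => by omega)]
  set ξ : ℕ → ℝ := fun j => dist (s0 j) (t0 j) with hξ
  have hξ0 : ∀ j, j ≥ kS + kT → ξ j = 0 := by
    intro j hj
    rw [hξ]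
    simp only
    rw [hs0v j (by omega), ht0]
    simp only [if_neg (by omega : ¬ j < kS)]
    rw [ht1v (j - kS) (by omega), dist_self]
  have hmem : MemLPhi Φ ξ := by
    constructor
    · apply tendsto_atTop_of_eventually_const (i₀ := kS + kT)
      intro i hi; exact hξ0 i hi
    · refine ⟨Φ.toFun (truncF ξ (kS + kT)), ?_⟩
      apply tendsto_atTop_of_eventually_const (i₀ := kS + kT)
      intro m hm
      congr 1
      apply Finsupp.ext; intro i
      rw [truncF_apply, truncF_apply]
      by_cases h1 : i < kS + kT
      · rw [if_pos h1, if_pos (by omega)]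
      · rw [if_neg h1]
        by_cases h2 : i < m
        · rw [if_pos h2]; exact hξ0 i (by omega)
        · rw [if_neg h2]
  have hne : {r | ∃ s t : ℕ → X, IsEnum x0 S s ∧ IsEnum x0 T t ∧
      MemLPhi Φ (fun i => dist (s i) (t i)) ∧ r = Φ.ext fun i => dist (s i) (t i)}.Nonempty :=
    ⟨Φ.ext ξ, s0, t0, hs0, ht0enum, hmem, rfl⟩
  rw [dPhi] at h
  obtain ⟨r, hrmem, hrlt⟩ := exists_lt_of_csInf_lt hne h
  obtain ⟨s, t, hsE, htE, ⟨htend, L, hL⟩, hrval⟩ := hrmem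
  have hLr : Φ.ext (fun i => dist (s i) (t i)) = L := by
    rw [SymmetricNorm.ext]
    exact hL.limUnder_eq
  refine ⟨s, t, hsE, htE, fun j => ?_⟩
  have h1 := ext_ge Φ (fun i => dist (s i) (t i)) (fun i => dist_nonneg) L hL j
  have h2 : dist (s j) (t j) ≤ r := by rw [hrval, hLr]; exact h1
  linarith

end Helpers3

section Lift
variable {n : ℕ}

/-- matching within `ε` up to permutation -/
def Close {n : ℕ} (ε : ℝ) (f g : Fin n → X) : Prop :=
  ∃ σ : Equiv.Perm (Fin n), ∀ i, dist (f i) (g (σ i)) < ε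

/-- orbit continuity -/
def OC (J : Set ℝ) (F : ℝ → Fin n → X) : Prop :=
  ∀ t ∈ J, ∀ ε > (0:ℝ), ∃ δ > (0:ℝ), ∀ t' ∈ J, |t' - t| < δ → Close ε (F t) (F t')

/-- coordinatewise continuity -/
def ContOn (J : Set ℝ) (G : ℝ → Fin n → X) : Prop :=
  ∀ t ∈ J, ∀ ε > (0:ℝ), ∃ δ > (0:ℝ), ∀ t' ∈ J, |t' - t| < δ → ∀ i, dist (G t i) (G t' i) < ε

/-- `G` is a continuous selection of `F` on `J` -/
def LiftOn (J : Set ℝ) (F G : ℝ → Fin n → X) : Prop :=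
  ContOn J G ∧ ∀ t ∈ J, ∃ σ : Equiv.Perm (Fin n), ∀ i, G t i = F t (σ i)

lemma ContOn.mono {J J' : Set ℝ} {G : ℝ → Fin n → X} (h : ContOn J G) (hsub : J' ⊆ J) :
    ContOn J' G := by
  intro t ht ε hε
  obtain ⟨δ, hδ, hp⟩ := h t (hsub ht) ε hε
  exact ⟨δ, hδ, fun t' ht' => hp t' (hsub ht')⟩

lemma LiftOn.mono {J J' : Set ℝ} {F G : ℝ → Fin n → X} (h : LiftOn J F G) (hsub : J' ⊆ J) :
    LiftOn J' F G :=
  ⟨h.1.mono hsub, fun t ht => h.2 t (hsub ht)⟩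

lemma OC.mono {J J' : Set ℝ} {F : ℝ → Fin n → X} (h : OC J F) (hsub : J' ⊆ J) :
    OC J' F := by
  intro t ht ε hε
  obtain ⟨δ, hδ, hp⟩ := h t (hsub ht) ε hε
  exact ⟨δ, hδ, fun t' ht' => hp t' (hsub ht')⟩

/-- gluing two lifts at a point -/
lemma liftOn_glue {J : Set ℝ} {c : ℝ} {F G1 G2 : ℝ → Fin n → X} (hc : c ∈ J)
    (h1 : LiftOn (J ∩ Set.Iic c) F G1) (h2 : LiftOn (J ∩ Set.Ici c) F G2) :
    ∃ G, LiftOn J F G ∧ ∀ t ∈ J ∩ Set.Iic c, G t = G1 t := by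
  obtain ⟨σ1, hσ1⟩ := h1.2 c ⟨hc, le_refl c⟩
  obtain ⟨σ2, hσ2⟩ := h2.2 c ⟨hc, le_refl c⟩
  set π : Equiv.Perm (Fin n) := σ1.trans σ2.symm with hπ
  have hkey : ∀ i, G1 c i = G2 c (π i) := by
    intro i
    rw [hσ1 i, hσ2 (π i)]
    simp [hπ]
  set G : ℝ → Fin n → X := fun t => if t ≤ c then G1 t else fun i => G2 t (π i) with hG
  refine ⟨G, ⟨?_, ?_⟩, ?_⟩
  · -- continuity
    intro t ht ε hε
    rcases lt_trichotomy t c with htc | htc | htc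
    · obtain ⟨δ1, hδ1, hp1⟩ := h1.1 t ⟨ht, le_of_lt htc⟩ ε hε
      refine ⟨min δ1 (c - t), lt_min hδ1 (by linarith), ?_⟩
      intro t' ht' habs i
      have h1' : |t' - t| < δ1 := lt_of_lt_of_le habs (min_le_left _ _)
      have h2' : t' ≤ c := by
        have := lt_of_lt_of_le habs (min_le_right _ _)
        have := abs_lt.1 this
        linarith
      have hGt : G t = G1 t := if_pos (le_of_lt htc)
      have hGt' : G t' = G1 t' := if_pos h2'
      rw [hGt, hGt']
      exact hp1 t' ⟨ht', h2'⟩ h1' i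
    · subst htc
      obtain ⟨δ1, hδ1, hp1⟩ := h1.1 t ⟨ht, le_refl t⟩ ε hε
      obtain ⟨δ2, hδ2, hp2⟩ := h2.1 t ⟨ht, le_refl t⟩ ε hε
      refine ⟨min δ1 δ2, lt_min hδ1 hδ2, ?_⟩
      intro t' ht' habs i
      have hGt : G t = G1 t := if_pos (le_refl t)
      by_cases h2' : t' ≤ t
      · have hGt' : G t' = G1 t' := if_pos h2'
        rw [hGt, hGt']
        exact hp1 t' ⟨ht', h2'⟩ (lt_of_lt_of_le habs (min_le_left _ _)) i
      · have hGt' : G t' = fun i => G2 t' (π i) := if_neg h2'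
        rw [hGt, hGt']
        have : G1 t i = G2 t (π i) := hkey i
        rw [this]
        exact hp2 t' ⟨ht', le_of_not_ge h2'⟩ (lt_of_lt_of_le habs (min_le_right _ _)) (π i)
    · obtain ⟨δ2, hδ2, hp2⟩ := h2.1 t ⟨ht, le_of_lt htc⟩ ε hε
      refine ⟨min δ2 (t - c), lt_min hδ2 (by linarith), ?_⟩
      intro t' ht' habs i
      have h1' : |t' - t| < δ2 := lt_of_lt_of_le habs (min_le_left _ _)
      have h2' : ¬ t' ≤ c := by
        have := lt_of_lt_of_le habs (min_le_right _ _)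
        have := abs_lt.1 this
        push_neg
        linarith
      have hGt : G t = fun i => G2 t (π i) := if_neg (not_le.2 htc)
      have hGt' : G t' = fun i => G2 t' (π i) := if_neg h2'
      rw [hGt, hGt']
      exact hp2 t' ⟨ht', le_of_lt (not_le.1 h2')⟩ h1' (π i)
  · -- selection property
    intro t ht
    by_cases htc : t ≤ c
    · obtain ⟨σ, hσ⟩ := h1.2 t ⟨ht, htc⟩
      refine ⟨σ, fun i => ?_⟩
      have hGt : G t = G1 t := if_pos htc
      rw [hGt]; exact hσ i
    · obtain ⟨σ, hσ⟩ := h2.2 t ⟨ht, le_of_lt (not_le.1 htc)⟩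
      refine ⟨π.trans σ, fun i => ?_⟩
      have hGt : G t = fun i => G2 t (π i) := if_neg htc
      rw [hGt]
      exact hσ (π i)
  · intro t ht
    exact if_pos ht.2

end Lift

section Lift2
variable {n : ℕ}

/-- local liftability -/
def LocLift (J : Set ℝ) (F : ℝ → Fin n → X) : Prop :=
  ∀ t ∈ J, ∃ δ > (0:ℝ), ∃ H, LiftOn (J ∩ Set.Ioo (t - δ) (t + δ)) F H

lemma exists_lift_Icc {J : Set ℝ} (hJ : J.OrdConnected) {F : ℝ → Fin n → X}
    (hloc : LocLift J F) {a b : ℝ} (ha : a ∈ J) (hb : b ∈ J) (hab : a ≤ b) :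
    ∃ H, LiftOn (Set.Icc a b) F H := by
  have hIccJ : Set.Icc a b ⊆ J := hJ.out ha hb
  set A : Set ℝ := {c | c ∈ Set.Icc a b ∧ ∃ H, LiftOn (Set.Icc a c) F H} with hA
  have haA : a ∈ A := by
    obtain ⟨δ, hδ, H, hH⟩ := hloc a ha
    refine ⟨⟨le_refl a, hab⟩, H, hH.mono ?_⟩
    intro x hx
    rw [Set.mem_Icc] at hx
    have hxa : x = a := le_antisymm hx.2 hx.1
    subst hxa
    exact ⟨ha, by constructor <;> [linarith; linarith]⟩
  have hbdd : BddAbove A := ⟨b, fun c hc => hc.1.2⟩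
  have hAne : A.Nonempty := ⟨a, haA⟩
  set cs := sSup A with hcs
  have hcs1 : a ≤ cs := le_csSup hbdd haA
  have hcs2 : cs ≤ b := csSup_le hAne (fun c hc => hc.1.2)
  have hcsJ : cs ∈ J := hIccJ ⟨hcs1, hcs2⟩
  obtain ⟨δ, hδ, H, hH⟩ := hloc cs hcsJ
  obtain ⟨c, hcA, hcgt⟩ : ∃ c ∈ A, cs - δ/2 < c := by
    apply exists_lt_of_lt_csSup hAne
    linarith
  have hcle : c ≤ cs := le_csSup hbdd hcA
  obtain ⟨hcIcc, L, hL⟩ := hcA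
  set d := min b (cs + δ/2) with hd
  have hcd : c ≤ d := le_min (hcIcc.2.trans (le_refl b) |>.trans (le_refl b)) (by linarith)
  have had : a ≤ d := le_min hab (by linarith)
  have hdb : d ≤ b := min_le_left _ _
  -- glue L and H on Icc a d
  have h1 : LiftOn (Set.Icc a d ∩ Set.Iic c) F L := by
    apply hL.mono
    intro x hx
    exact ⟨hx.1.1, hx.2⟩
  have h2 : LiftOn (Set.Icc a d ∩ Set.Ici c) F H := by
    apply hH.mono
    intro x hx
    obtain ⟨⟨hx1, hx2⟩, hx3⟩ := hx
    refine ⟨hIccJ ⟨hx1, hx2.trans hdb⟩, ?_, ?_⟩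
    · have : cs - δ/2 < x := lt_of_lt_of_le hcgt hx3
      linarith
    · have : x ≤ cs + δ/2 := hx2.trans (min_le_right _ _)
      linarith
  obtain ⟨G, hG, -⟩ := liftOn_glue (J := Set.Icc a d) (c := c) ⟨hcIcc.1, hcd⟩ h1 h2
  have hdA : d ∈ A := ⟨⟨had, hdb⟩, G, hG⟩
  have hdcs : d ≤ cs := le_csSup hbdd hdA
  by_cases hcase : b ≤ cs + δ/2
  · have : d = b := min_eq_left hcase
    rw [this] at hdA
    exact hdA.2
  · exfalso
    push_neg at hcase
    have : d = cs + δ/2 := min_eq_right (le_of_lt hcase)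
    rw [this] at hdcs
    linarith

end Lift2

section Lift3
variable {n : ℕ}

lemma exists_cofinal_seq (R : Set ℝ) (t0 : ℝ) (ht0 : t0 ∈ R) :
    ∃ b : ℕ → ℝ, (∀ k, b k ∈ R) ∧ Monotone b ∧ ∀ u ∈ R, ∃ k, u ≤ b k := by
  have hRne : R.Nonempty := ⟨t0, ht0⟩
  have hstep : ∀ k : ℕ, ∃ v ∈ R,
      ((∀ u ∈ R, u < t0 + k) → (sSup R ∈ R → v = sSup R) ∧ (sSup R ∉ R → sSup R - 1/(k+1) < v)) ∧
      ((∃ u ∈ R, t0 + k ≤ u) → t0 + k ≤ v) := by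
    intro k
    by_cases h : ∃ u ∈ R, t0 + (k:ℝ) ≤ u
    · obtain ⟨u, huR, hu⟩ := h
      refine ⟨u, huR, fun hall => absurd (hall u huR) (not_lt.2 hu), fun _ => hu⟩
    · by_cases h2 : sSup R ∈ R
      · refine ⟨sSup R, h2, fun _ => ⟨fun _ => rfl, fun hc => absurd h2 hc⟩, fun hc => absurd hc h⟩
      · push_neg at h
        have hbddR : BddAbove R := ⟨t0 + k, fun u hu => le_of_lt (h u hu)⟩
        obtain ⟨v, hvR, hv⟩ : ∃ v ∈ R, sSup R - 1/(k+1) < v := by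
          apply exists_lt_of_lt_csSup hRne
          have : (0:ℝ) < 1/(k+1) := by positivity
          linarith
        exact ⟨v, hvR, fun _ => ⟨fun hc => absurd hc h2, fun _ => hv⟩, fun hc => absurd hc (by push_neg; exact h)⟩
  choose c hcR hc2 using hstep
  -- monotone running max
  set b : ℕ → ℝ := fun k => Nat.rec (c 0) (fun k ih => max ih (c (k+1))) k with hb
  have hbsucc : ∀ k, b (k+1) = max (b k) (c (k+1)) := fun k => rfl
  have hbR : ∀ k, b k ∈ R := by
    intro k
    induction k with
    | zero => exact hcR 0
    | succ k ih =>
      rw [hbsucc]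
      rcases le_total (b k) (c (k+1)) with h | h
      · rw [max_eq_right h]; exact hcR (k+1)
      · rw [max_eq_left h]; exact ih
  have hbmono : Monotone b := by
    apply monotone_nat_of_le_succ
    intro k; rw [hbsucc]; exact le_max_left _ _
  have hcb : ∀ k, c k ≤ b k := by
    intro k
    cases k with
    | zero => exact le_refl _
    | succ k => rw [hbsucc]; exact le_max_right _ _
  refine ⟨b, hbR, hbmono, ?_⟩
  intro u huR
  by_cases hbig : ∃ k : ℕ, ∀ v ∈ R, v < t0 + k
  · obtain ⟨k0, hk0⟩ := hbig
    have hbddR : BddAbove R := ⟨t0 + k0, fun v hv => le_of_lt (hk0 v hv)⟩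
    by_cases h2 : sSup R ∈ R
    · refine ⟨k0, ?_⟩
      have := ((hc2 k0).1 hk0).1 h2
      have hub : u ≤ sSup R := le_csSup hbddR huR
      calc u ≤ sSup R := hub
        _ = c k0 := this.symm
        _ ≤ b k0 := hcb k0
    · have hu_lt : u < sSup R := lt_of_le_of_ne (le_csSup hbddR huR) (fun h => h2 (h ▸ huR))
      obtain ⟨k1, hk1⟩ := exists_nat_one_div_lt (by linarith : (0:ℝ) < sSup R - u)
      refine ⟨max k0 k1, ?_⟩
      set k := max k0 k1 with hk
      have hall : ∀ v ∈ R, v < t0 + k := by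
        intro v hv
        have := hk0 v hv
        have hk0k : (k0:ℝ) ≤ k := by exact_mod_cast Nat.cast_le.2 (le_max_left _ _)
        linarith
      have := ((hc2 k).1 hall).2 h2
      have hmono1 : 1/((k:ℝ)+1) ≤ 1/((k1:ℝ)+1) := by
        apply one_div_le_one_div_of_le
        · positivity
        · have : (k1:ℝ) ≤ k := by exact_mod_cast Nat.cast_le.2 (le_max_right _ _)
          linarith
      have : sSup R - 1/((k1:ℝ)+1) ≤ c k := by linarith
      have : u ≤ c k := by
        have hlt : 1/((k1:ℝ)+1) < sSup R - u := hk1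
        linarith
      exact this.trans (hcb k)
  · push_neg at hbig
    obtain ⟨k, hk⟩ : ∃ k : ℕ, u ≤ t0 + k := by
      obtain ⟨k, hk⟩ := exists_nat_ge (u - t0)
      exact ⟨k, by linarith⟩
    obtain ⟨v, hvR, hvge⟩ := hbig k
    have := (hc2 k).2 ⟨v, hvR, hvge⟩
    exact ⟨k, by linarith [hcb k]⟩

lemma exists_lift_ray {J : Set ℝ} (hJ : J.OrdConnected) {F : ℝ → Fin n → X}
    (hloc : LocLift J F) {t0 : ℝ} (ht0 : t0 ∈ J) :
    ∃ G, LiftOn (J ∩ Set.Ici t0) F G := by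
  classical
  set R := J ∩ Set.Ici t0 with hR
  have ht0R : t0 ∈ R := ⟨ht0, le_refl t0⟩
  obtain ⟨b, hbR, hbmono, hbcof⟩ := exists_cofinal_seq R t0 ht0R
  have hIccJ : ∀ k, Set.Icc t0 (b k) ⊆ R := by
    intro k x hx
    exact ⟨hJ.out ht0 (hbR k).1 ⟨hx.1, hx.2⟩, hx.1⟩
  -- base lift
  obtain ⟨H0, hH0⟩ := exists_lift_Icc hJ hloc ht0 (hbR 0).1 (hbR 0).2
  -- step
  have hstep : ∀ k (H : ℝ → Fin n → X), LiftOn (Set.Icc t0 (b k)) F H →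
      ∃ H', LiftOn (Set.Icc t0 (b (k+1))) F H' ∧ ∀ t ∈ Set.Icc t0 (b k), H' t = H t := by
    intro k H hH
    obtain ⟨K, hK⟩ := exists_lift_Icc hJ hloc (hbR k).1 (hbR (k+1)).1 (hbmono (Nat.le_succ k))
    have hbk1 : b k ∈ Set.Icc t0 (b (k+1)) := ⟨(hbR k).2, hbmono (Nat.le_succ k)⟩
    have h1 : LiftOn (Set.Icc t0 (b (k+1)) ∩ Set.Iic (b k)) F H := by
      apply hH.mono; intro x hx; exact ⟨hx.1.1, hx.2⟩
    have h2 : LiftOn (Set.Icc t0 (b (k+1)) ∩ Set.Ici (b k)) F K := by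
      apply hK.mono; intro x hx; exact ⟨hx.2, hx.1.2⟩
    obtain ⟨G, hG, hGeq⟩ := liftOn_glue (J := Set.Icc t0 (b (k+1))) (c := b k) hbk1 h1 h2
    refine ⟨G, hG, ?_⟩
    intro t ht
    exact hGeq t ⟨⟨ht.1, ht.2.trans (hbmono (Nat.le_succ k))⟩, ht.2⟩
  choose step hstep1 hstep2 using hstep
  set Hs : ∀ k : ℕ, {H : ℝ → Fin n → X // LiftOn (Set.Icc t0 (b k)) F H} :=
    fun k => Nat.rec ⟨H0, hH0⟩ (fun k ih => ⟨step k ih.1 ih.2, hstep1 k ih.1 ih.2⟩) k with hHs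
  have hHsucc : ∀ k, (Hs (k+1)).1 = step k (Hs k).1 (Hs k).2 := fun k => rfl
  have hagree : ∀ k, ∀ t ∈ Set.Icc t0 (b k), (Hs (k+1)).1 t = (Hs k).1 t := by
    intro k t ht
    rw [hHsucc]
    exact hstep2 k (Hs k).1 (Hs k).2 t ht
  have hco : ∀ k k', k ≤ k' → ∀ t ∈ Set.Icc t0 (b k), (Hs k').1 t = (Hs k).1 t := by
    intro k k' hkk'
    induction k' with
    | zero =>
      have : k = 0 := Nat.le_zero.1 hkk'
      subst this; intro t ht; rfl
    | succ k' ih =>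
      rcases Nat.lt_or_ge k (k'+1) with h | h
      · have hk' : k ≤ k' := Nat.lt_succ_iff.1 h
        intro t ht
        have h2 : t ∈ Set.Icc t0 (b k') := ⟨ht.1, ht.2.trans (hbmono hk')⟩
        rw [hagree k' t h2]
        exact ih hk' t ht
      · have : k = k' + 1 := le_antisymm hkk' h
        subst this; intro t ht; rfl
  -- global definition
  set G : ℝ → Fin n → X := fun t => if h : ∃ k, t ≤ b k then (Hs (Nat.find h)).1 t else F t with hG
  have hGeq : ∀ t, t0 ≤ t → ∀ k, t ≤ b k → G t = (Hs k).1 t := by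
    intro t ht0t k htk
    have hex : ∃ k, t ≤ b k := ⟨k, htk⟩
    have h1 : G t = (Hs (Nat.find hex)).1 t := dif_pos hex
    rw [h1]
    have h2 := Nat.find_spec hex
    rcases le_total (Nat.find hex) k with h | h
    · exact (hco _ k h t ⟨ht0t, h2⟩).symm
    · exact hco _ _ h t ⟨ht0t, htk⟩
  refine ⟨G, ?_, ?_⟩
  · -- continuity
    intro t ht ε hε
    obtain ⟨k, htk⟩ := hbcof t ht
    by_cases hcase : ∃ k', t < b k'
    · obtain ⟨k', hk'⟩ := hcase
      obtain ⟨δ, hδ, hp⟩ := (Hs k').2.1 t ⟨ht.2, le_of_lt hk'⟩ ε hε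
      refine ⟨min δ (b k' - t), lt_min hδ (by linarith), ?_⟩
      intro t' ht' habs i
      have h1 : |t' - t| < δ := lt_of_lt_of_le habs (min_le_left _ _)
      have h2 : t' ≤ b k' := by
        have := abs_lt.1 (lt_of_lt_of_le habs (min_le_right _ _))
        linarith
      rw [hGeq t ht.2 k' (le_of_lt hk'), hGeq t' ht'.2 k' h2]
      exact hp t' ⟨ht'.2, h2⟩ h1 i
    · push_neg at hcase
      -- t is an upper bound for R
      have hub : ∀ u ∈ R, u ≤ t := by
        intro u hu
        obtain ⟨k', hk'⟩ := hbcof u hu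
        exact hk'.trans (hcase k')
      obtain ⟨δ, hδ, hp⟩ := (Hs k).2.1 t ⟨ht.2, htk⟩ ε hε
      refine ⟨δ, hδ, ?_⟩
      intro t' ht' habs i
      have h2 : t' ≤ b k := by
        have := hub t' ht'
        have := hcase k
        have h3 := le_antisymm htk (hcase k) ▸ this
        calc t' ≤ t := hub t' ht'
          _ ≤ b k := htk
      rw [hGeq t ht.2 k htk, hGeq t' ht'.2 k h2]
      exact hp t' ⟨ht'.2, h2⟩ habs i
  · -- selection
    intro t ht
    obtain ⟨k, htk⟩ := hbcof t ht
    rw [hGeq t ht.2 k htk]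
    exact (Hs k).2.2 t ⟨ht.2, htk⟩

end Lift3

section Lift4
variable {n : ℕ}

lemma LiftOn.comp_neg {J : Set ℝ} {F H : ℝ → Fin n → X} (h : LiftOn J F H) :
    LiftOn ((fun x : ℝ => -x) ⁻¹' J) (fun t => F (-t)) (fun t => H (-t)) := by
  constructor
  · intro t ht ε hε
    obtain ⟨δ, hδ, hp⟩ := h.1 (-t) ht ε hε
    refine ⟨δ, hδ, ?_⟩
    intro t' ht' habs i
    have habs' : |(-t') - (-t)| < δ := by
      rw [show (-t') - (-t) = -(t' - t) by ring, abs_neg]; exact habs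
    exact hp (-t') ht' habs' i
  · intro t ht
    exact h.2 (-t) ht

lemma exists_lift_of_loc {J : Set ℝ} (hJ : J.OrdConnected) {F : ℝ → Fin n → X}
    (hloc : LocLift J F) : ∃ G, LiftOn J F G := by
  rcases J.eq_empty_or_nonempty with hje | ⟨t0, ht0⟩
  · refine ⟨F, ?_, ?_⟩
    · intro t ht; rw [hje] at ht; exact absurd ht (Set.notMem_empty t)
    · intro t ht; rw [hje] at ht; exact absurd ht (Set.notMem_empty t)
  · obtain ⟨Gr, hGr⟩ := exists_lift_ray hJ hloc ht0
    -- mirrored data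
    set Jm : Set ℝ := (fun x : ℝ => -x) ⁻¹' J with hJm
    have hJmoc : Jm.OrdConnected := by
      constructor
      intro x hx y hy z hz
      have : -z ∈ Set.Icc (-y) (-x) := ⟨neg_le_neg hz.2, neg_le_neg hz.1⟩
      exact hJ.out hy hx this
    have hlocm : LocLift Jm (fun t => F (-t)) := by
      intro t ht
      obtain ⟨δ, hδ, H, hH⟩ := hloc (-t) ht
      refine ⟨δ, hδ, fun u => H (-u), ?_⟩
      apply (LiftOn.comp_neg hH).mono
      intro x hx
      simp only [Set.mem_preimage, Set.mem_inter_iff, Set.mem_Ioo] at hx ⊢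
      exact ⟨hx.1, by linarith [hx.2.1, hx.2.2], by linarith [hx.2.1, hx.2.2]⟩
    have ht0m : -t0 ∈ Jm := by simp only [hJm, Set.mem_preimage, neg_neg]; exact ht0
    obtain ⟨Gm, hGm⟩ := exists_lift_ray hJmoc hlocm ht0m
    have hGl := LiftOn.comp_neg hGm
    have hFeq : (fun t => F (-(-t))) = F := funext fun t => by rw [neg_neg]
    have hdom : (fun x : ℝ => -x) ⁻¹' (Jm ∩ Set.Ici (-t0)) = J ∩ Set.Iic t0 := by
      ext x
      simp only [Set.mem_preimage, Set.mem_inter_iff, Set.mem_Ici, Set.mem_Iic, hJm, neg_neg]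
      constructor
      · rintro ⟨h1, h2⟩; exact ⟨h1, by linarith⟩
      · rintro ⟨h1, h2⟩; exact ⟨h1, by linarith⟩
    rw [hdom, hFeq] at hGl
    obtain ⟨G, hG, -⟩ := liftOn_glue ht0 hGl hGr
    exact ⟨G, hG⟩

end Lift4

section Lift5

theorem lift_exists (n : ℕ) : ∀ (J : Set ℝ), J.OrdConnected → ∀ F : ℝ → Fin n → X,
    OC J F → ∃ G, LiftOn J F G := by
  induction n using Nat.strong_induction_on with
  | _ n IH =>
  intro J hJ F hOC
  classical
  rcases Nat.eq_zero_or_pos n with hn0 | hnpos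
  · subst hn0
    refine ⟨F, ?_, ?_⟩
    · intro t ht ε hε; exact ⟨1, one_pos, fun t' ht' h i => i.elim0⟩
    · intro t ht; exact ⟨Equiv.refl _, fun i => i.elim0⟩
  set Z : Set ℝ := {t | t ∈ J ∧ ∀ i j, F t i = F t j} with hZ
  set U : Set ℝ := J \ Z with hU
  have hUJ : U ⊆ J := Set.diff_subset
  have hUne : ∀ t ∈ U, ∃ i j : Fin n, F t i ≠ F t j := by
    intro t ht
    by_contra hcon
    push_neg at hcon
    exact ht.2 ⟨ht.1, hcon⟩
  -- U is relatively open in J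
  have hopen : ∀ t ∈ U, ∃ δ > (0:ℝ), ∀ t' ∈ J, |t' - t| < δ → t' ∈ U := by
    intro t ht
    obtain ⟨i, j, hij⟩ := hUne t ht
    have hρpos : 0 < dist (F t i) (F t j) := dist_pos.2 hij
    obtain ⟨δ, hδ, hp⟩ := hOC t (hUJ ht) (dist (F t i) (F t j) / 2) (by linarith)
    refine ⟨δ, hδ, ?_⟩
    intro t' ht' habs
    obtain ⟨σ, hσ⟩ := hp t' ht' habs
    refine ⟨ht', ?_⟩
    intro hcon
    have h1 := hσ i
    have h2 := hσ j
    have h3 : F t' (σ i) = F t' (σ j) := hcon.2 _ _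
    have h4 : dist (F t i) (F t j) ≤ dist (F t i) (F t' (σ i)) + dist (F t' (σ j)) (F t j) := by
      calc dist (F t i) (F t j)
          ≤ dist (F t i) (F t' (σ i)) + dist (F t' (σ i)) (F t j) := dist_triangle _ _ _
        _ = dist (F t i) (F t' (σ i)) + dist (F t' (σ j)) (F t j) := by rw [h3]
    rw [dist_comm (F t' (σ j)) (F t j)] at h4
    linarith
  -- local liftability on U (cluster decomposition + induction)
  have hlocU : ∀ t1 ∈ U, ∃ δ > (0:ℝ), ∃ H, LiftOn (J ∩ Set.Ioo (t1 - δ) (t1 + δ)) F H := by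
    intro t1 ht1
    obtain ⟨i0, j0, hij0⟩ := hUne t1 ht1
    set Y : Finset X := Finset.image (F t1) Finset.univ with hY
    have hYmem : ∀ i, F t1 i ∈ Y := fun i => Finset.mem_image_of_mem _ (Finset.mem_univ i)
    set Dset : Finset ℝ := ((Y ×ˢ Y).filter (fun p => p.1 ≠ p.2)).image
      (fun p => dist p.1 p.2) with hDset
    have hDne : Dset.Nonempty := by
      refine ⟨dist (F t1 i0) (F t1 j0), Finset.mem_image.2 ⟨(F t1 i0, F t1 j0), ?_, rfl⟩⟩
      exact Finset.mem_filter.2 ⟨Finset.mem_product.2 ⟨hYmem i0, hYmem j0⟩, hij0⟩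
    set ρ := Dset.min' hDne with hρ
    have hρpos : 0 < ρ := by
      obtain ⟨p, hp, hpeq⟩ := Finset.mem_image.1 (Dset.min'_mem hDne)
      have := (Finset.mem_filter.1 hp).2
      rw [hρ] at *
      rw [← hpeq]
      exact dist_pos.2 this
    have hρle : ∀ y ∈ Y, ∀ y' ∈ Y, y ≠ y' → ρ ≤ dist y y' := by
      intro y hy y' hy' hne
      apply Finset.min'_le
      exact Finset.mem_image.2 ⟨(y, y'), Finset.mem_filter.2
        ⟨Finset.mem_product.2 ⟨hy, hy'⟩, hne⟩, rfl⟩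
    have huniq : ∀ (z : X), ∀ y ∈ Y, ∀ y' ∈ Y, dist z y < ρ/3 → dist z y' < ρ/3 → y = y' := by
      intro z y hy y' hy' h1 h2
      by_contra hne
      have h3 := hρle y hy y' hy' hne
      have h4 : dist y y' ≤ dist z y + dist z y' := by
        calc dist y y' ≤ dist y z + dist z y' := dist_triangle _ _ _
          _ = dist z y + dist z y' := by rw [dist_comm y z]
      linarith
    obtain ⟨δ0, hδ0, hp0⟩ := hOC t1 (hUJ ht1) (ρ/9) (by linarith)
    set N := J ∩ Set.Ioo (t1 - δ0) (t1 + δ0) with hN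
    have hNJ : N ⊆ J := Set.inter_subset_left
    have hNoc : N.OrdConnected := hJ.inter Set.ordConnected_Ioo
    have hmatch : ∀ t' ∈ N, Close (ρ/9) (F t1) (F t') := by
      intro t' ht'
      apply hp0 t' ht'.1
      have := ht'.2
      rw [Set.mem_Ioo] at this
      rw [abs_lt]
      constructor <;> linarith [this.1, this.2]
    set C : X → ℝ → Finset (Fin n) :=
      fun y t' => Finset.univ.filter (fun i => dist (F t' i) y < ρ/9) with hC
    set P : X → Finset (Fin n) := fun y => Finset.univ.filter (fun i => F t1 i = y) with hP
    have hCmem : ∀ y t' i, i ∈ C y t' ↔ dist (F t' i) y < ρ/9 := by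
      intro y t' i; rw [hC]; simp
    have hPdef : ∀ y i, i ∈ P y ↔ F t1 i = y := by
      intro y i; rw [hP]; simp
    have hcover : ∀ t' ∈ N, ∀ i, ∃ y ∈ Y, i ∈ C y t' := by
      intro t' ht' i
      obtain ⟨σ, hσ⟩ := hmatch t' ht'
      refine ⟨F t1 (σ.symm i), hYmem _, ?_⟩
      rw [hCmem]
      have := hσ (σ.symm i)
      rw [Equiv.apply_symm_apply] at this
      rw [dist_comm]
      exact this
    have hCP : ∀ t' ∈ N, ∀ y ∈ Y, ∃ σ : Equiv.Perm (Fin n),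
        (∀ k, dist (F t1 k) (F t' (σ k)) < ρ/9) ∧ C y t' = (P y).image σ := by
      intro t' ht' y hy
      obtain ⟨σ, hσ⟩ := hmatch t' ht'
      refine ⟨σ, hσ, ?_⟩
      ext i
      rw [hCmem, Finset.mem_image]
      constructor
      · intro hi
        refine ⟨σ.symm i, ?_, Equiv.apply_symm_apply σ i⟩
        rw [hPdef]
        have h1 : dist (F t1 (σ.symm i)) (F t' i) < ρ/9 := by
          have := hσ (σ.symm i); rwa [Equiv.apply_symm_apply] at this
        have h2 : dist (F t1 (σ.symm i)) y < ρ/3 := by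
          calc dist (F t1 (σ.symm i)) y ≤ dist (F t1 (σ.symm i)) (F t' i) + dist (F t' i) y :=
                dist_triangle _ _ _
            _ < ρ/9 + ρ/9 := by linarith
            _ ≤ ρ/3 := by linarith
        exact huniq (F t1 (σ.symm i)) (F t1 (σ.symm i)) (hYmem _) y hy
          (by rw [dist_self]; linarith) h2
      · rintro ⟨k, hk, rfl⟩
        rw [hPdef] at hk
        have := hσ k
        rw [hk] at this
        rwa [dist_comm]
    have hcard : ∀ t' ∈ N, ∀ y ∈ Y, (C y t').card = (P y).card := by
      intro t' ht' y hy
      obtain ⟨σ, -, heq⟩ := hCP t' ht' y hy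
      rw [heq, Finset.card_image_of_injective _ σ.injective]
    -- cluster enumerations
    set e : (y : X) → ℝ → Fin ((P y).card) → Fin n := fun y t' a =>
      if h : (C y t').card = (P y).card then ((C y t').orderIsoOfFin h a : Fin n)
      else ⟨0, hnpos⟩ with he
    have he_mem : ∀ t' ∈ N, ∀ y ∈ Y, ∀ a, e y t' a ∈ C y t' := by
      intro t' ht' y hy a
      rw [he]
      simp only [dif_pos (hcard t' ht' y hy)]
      exact (((C y t').orderIsoOfFin (hcard t' ht' y hy)) a).2
    have he_inj : ∀ t' ∈ N, ∀ y ∈ Y, Function.Injective (e y t') := by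
      intro t' ht' y hy a a' haa
      rw [he] at haa
      simp only [dif_pos (hcard t' ht' y hy)] at haa
      exact ((C y t').orderIsoOfFin (hcard t' ht' y hy)).injective (Subtype.ext haa)
    have he_surj : ∀ t' ∈ N, ∀ y ∈ Y, ∀ i ∈ C y t', ∃ a, e y t' a = i := by
      intro t' ht' y hy i hi
      refine ⟨((C y t').orderIsoOfFin (hcard t' ht' y hy)).symm ⟨i, hi⟩, ?_⟩
      rw [he]
      simp only [dif_pos (hcard t' ht' y hy)]
      rw [OrderIso.apply_symm_apply]
    set Fy : (y : X) → ℝ → Fin ((P y).card) → X := fun y t' a => F t' (e y t' a) with hFy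
    -- orbit continuity of the cluster maps
    have hFyOC : ∀ y ∈ Y, OC N (Fy y) := by
      intro y hy t2 ht2 ε hε
      set ε' := min ε (ρ/9) with hε'
      have hε'pos : 0 < ε' := lt_min hε (by linarith)
      obtain ⟨δ, hδ, hp⟩ := hOC t2 (hNJ ht2) ε' hε'pos
      refine ⟨δ, hδ, ?_⟩
      intro t3 ht3 habs
      obtain ⟨σ, hσ⟩ := hp t3 (hNJ ht3) habs
      have hmapsto : ∀ i ∈ C y t2, σ i ∈ C y t3 := by
        intro i hi
        rw [hCmem] at hi
        have h2 : dist (F t2 i) (F t3 (σ i)) < ε' := hσ i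
        have h3 : dist (F t3 (σ i)) y < ρ/3 := by
          have h5 : ε' ≤ ρ/9 := min_le_right _ _
          calc dist (F t3 (σ i)) y ≤ dist (F t3 (σ i)) (F t2 i) + dist (F t2 i) y :=
              dist_triangle _ _ _
            _ = dist (F t2 i) (F t3 (σ i)) + dist (F t2 i) y := by rw [dist_comm]
            _ < ε' + ρ/9 := by linarith
            _ ≤ ρ/3 := by linarith
        obtain ⟨y', hy', hy'C⟩ := hcover t3 ht3 (σ i)
        rw [hCmem] at hy'C
        have : y' = y := huniq (F t3 (σ i)) y' hy' y hy (by linarith) h3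
        rw [hCmem]
        rw [this] at hy'C
        exact hy'C
      set m : Fin ((P y).card) → Fin ((P y).card) := fun a =>
        ((C y t3).orderIsoOfFin (hcard t3 ht3 y hy)).symm
          ⟨σ (e y t2 a), hmapsto _ (he_mem t2 ht2 y hy a)⟩ with hm
      have hminj : Function.Injective m := by
        intro a a' haa
        rw [hm] at haa
        have := ((C y t3).orderIsoOfFin (hcard t3 ht3 y hy)).symm.injective haa
        have h2 : σ (e y t2 a) = σ (e y t2 a') := congrArg Subtype.val this
        exact he_inj t2 ht2 y hy (σ.injective h2)
      have hmbij := Finite.injective_iff_bijective.1 hminj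
      have hem : ∀ a, e y t3 (m a) = σ (e y t2 a) := by
        intro a
        rw [he, hm]
        simp only [dif_pos (hcard t3 ht3 y hy)]
        rw [OrderIso.apply_symm_apply]
      refine ⟨Equiv.ofBijective m hmbij, ?_⟩
      intro a
      show dist (F t2 (e y t2 a)) (F t3 (e y t3 (m a))) < ε
      rw [hem]
      exact lt_of_lt_of_le (hσ (e y t2 a)) (min_le_left _ _)
    -- lifts of the cluster maps
    have hGy : ∀ y : X, ∃ Gy : ℝ → Fin ((P y).card) → X, LiftOn N (Fy y) Gy := by
      intro y
      by_cases hy : y ∈ Y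
      · have hlt : (P y).card < n := by
          have : ∃ i, F t1 i ≠ y := by
            by_cases h1 : F t1 i0 = y
            · exact ⟨j0, fun hc => hij0 ((hc.trans h1.symm).symm)⟩
            · exact ⟨i0, h1⟩
          obtain ⟨i, hi⟩ := this
          have hne : P y ≠ Finset.univ := by
            intro hcon
            have : i ∈ P y := hcon ▸ Finset.mem_univ i
            rw [hPdef] at this
            exact hi this
          have := Finset.card_lt_card (Finset.ssubset_univ_iff.2 hne)
          rwa [Finset.card_univ, Fintype.card_fin] at this
        exact IH ((P y).card) hlt N hNoc (Fy y) (hFyOC y hy)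
      · have hc0 : (P y).card = 0 := by
          rw [Finset.card_eq_zero]
          apply Finset.eq_empty_of_forall_notMem
          intro i hi
          rw [hPdef] at hi
          exact hy (hi ▸ hYmem i)
        refine ⟨Fy y, ?_, ?_⟩
        · intro t' ht' ε hε
          exact ⟨1, one_pos, fun t'' ht'' h a => absurd a.isLt (by omega)⟩
        · intro t' ht'
          exact ⟨Equiv.refl _, fun a => absurd a.isLt (by omega)⟩
    choose Gy hGyp using hGy
    have hPmem : ∀ i : Fin n, i ∈ P (F t1 i) := by
      intro i; rw [hPdef]
    set idx : (i : Fin n) → Fin ((P (F t1 i)).card) :=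
      fun i => ((P (F t1 i)).orderIsoOfFin rfl).symm ⟨i, hPmem i⟩ with hidx
    set H : ℝ → Fin n → X := fun t' i => Gy (F t1 i) t' (idx i) with hH
    refine ⟨δ0, hδ0, H, ?_, ?_⟩
    · -- continuity of H on N
      intro t2 ht2 ε hε
      have hδi : ∀ i : Fin n, ∃ δ > (0:ℝ), ∀ t3 ∈ N, |t3 - t2| < δ →
          ∀ a, dist (Gy (F t1 i) t2 a) (Gy (F t1 i) t3 a) < ε :=
        fun i => (hGyp (F t1 i)).1 t2 ht2 ε hε
      choose δf hδfpos hδfp using hδi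
      refine ⟨Finset.univ.inf' ⟨⟨0, hnpos⟩, Finset.mem_univ _⟩ δf, ?_, ?_⟩
      · exact (Finset.lt_inf'_iff _).2 (fun i _ => hδfpos i)
      · intro t3 ht3 habs i
        have : |t3 - t2| < δf i :=
          lt_of_lt_of_le habs (Finset.inf'_le _ (Finset.mem_univ i))
        exact hδfp i t3 ht3 this (idx i)
    · -- selection property of H on N
      intro t2 ht2
      have hsel : ∀ y : X, ∃ σy : Equiv.Perm (Fin ((P y).card)),
          ∀ a, Gy y t2 a = Fy y t2 (σy a) := fun y => (hGyp y).2 t2 ht2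
      choose σy hσy using hsel
      set w : Fin n → Fin n := fun i => e (F t1 i) t2 (σy (F t1 i) (idx i)) with hw
      have hwv : ∀ i, H t2 i = F t2 (w i) := by
        intro i
        rw [hH]
        simp only
        rw [hσy (F t1 i) (idx i)]
      have hwsurj : Function.Surjective w := by
        intro j
        obtain ⟨y, hyY, hjC⟩ := hcover t2 ht2 j
        obtain ⟨a, ha⟩ := he_surj t2 ht2 y hyY j hjC
        obtain ⟨i, hiP, hieq⟩ : ∃ i : Fin n, i ∈ P y ∧
            ((((P y).orderIsoOfFin rfl) ((σy y).symm a)) : Fin n) = i :=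
          ⟨_, (((P y).orderIsoOfFin rfl) ((σy y).symm a)).2, rfl⟩
        have hyi : F t1 i = y := (hPdef y i).1 hiP
        subst hyi
        refine ⟨i, ?_⟩
        have hidxi : idx i = (σy (F t1 i)).symm a := by
          have h2 : (⟨i, hPmem i⟩ : {x // x ∈ P (F t1 i)}) =
              ((P (F t1 i)).orderIsoOfFin rfl) ((σy (F t1 i)).symm a) :=
            Subtype.ext hieq.symm
          show ((P (F t1 i)).orderIsoOfFin rfl).symm ⟨i, hPmem i⟩ = _
          rw [h2, OrderIso.symm_apply_apply]
        show e (F t1 i) t2 (σy (F t1 i) (idx i)) = j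
        rw [hidxi, Equiv.apply_symm_apply, ha]
      have hwbij : Function.Bijective w :=
        ⟨Finite.injective_iff_surjective.2 hwsurj, hwsurj⟩
      refine ⟨Equiv.ofBijective w hwbij, ?_⟩
      intro i
      rw [hwv]
      rfl
  -- per-component lifts
  have hcomp : ∀ (Cs : Set ℝ), (∃ t ∈ U, Cs = Set.ordConnectedComponent U t) →
      ∃ H, LiftOn Cs F H := by
    rintro Cs ⟨t, htU, rfl⟩
    apply exists_lift_of_loc (inferInstance : (Set.ordConnectedComponent U t).OrdConnected)
    intro u hu
    have huU : u ∈ U := Set.ordConnectedComponent_subset hu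
    obtain ⟨δ1, hδ1, H, hH⟩ := hlocU u huU
    refine ⟨δ1, hδ1, H, ?_⟩
    apply hH.mono
    intro x hx
    exact ⟨hUJ (Set.ordConnectedComponent_subset hx.1), hx.2⟩
  have hcompex : ∀ Cs : Set ℝ, ∃ H,
      (∃ t ∈ U, Cs = Set.ordConnectedComponent U t) → LiftOn Cs F H := by
    intro Cs
    by_cases h : ∃ t ∈ U, Cs = Set.ordConnectedComponent U t
    · obtain ⟨H, hH⟩ := hcomp Cs h; exact ⟨H, fun _ => hH⟩
    · exact ⟨F, fun hc => absurd hc h⟩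
  choose GC hGC using hcompex
  set G : ℝ → Fin n → X :=
    fun t => if h : t ∈ U then GC (Set.ordConnectedComponent U t) t else F t with hG
  have hGU : ∀ t ∈ U, G t = GC (Set.ordConnectedComponent U t) t := fun t ht => dif_pos ht
  have hGZ : ∀ t, t ∉ U → G t = F t := fun t h2 => dif_neg h2
  have hcompsame : ∀ t ∈ U, ∀ t' ∈ Set.ordConnectedComponent U t,
      Set.ordConnectedComponent U t' = Set.ordConnectedComponent U t :=
    fun t _ t' ht' => (Set.ordConnectedComponent_eq (Set.mem_ordConnectedComponent.1 ht')).symm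
  have hliftC : ∀ t ∈ U, LiftOn (Set.ordConnectedComponent U t) F
      (GC (Set.ordConnectedComponent U t)) := fun t ht => hGC _ ⟨t, ht, rfl⟩
  have horb : ∀ t ∈ J, ∃ σ : Equiv.Perm (Fin n), ∀ i, G t i = F t (σ i) := by
    intro t ht
    by_cases htU : t ∈ U
    · have h1 := (hliftC t htU).2 t (Set.self_mem_ordConnectedComponent.2 htU)
      rw [hGU t htU]; exact h1
    · rw [hGZ t htU]; exact ⟨Equiv.refl _, fun i => rfl⟩
  refine ⟨G, ?_, horb⟩
  intro t ht ε hε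
  by_cases htU : t ∈ U
  · obtain ⟨δ2, hδ2, hop⟩ := hopen t htU
    have hIooOC : (J ∩ Set.Ioo (t - δ2) (t + δ2)).OrdConnected := hJ.inter Set.ordConnected_Ioo
    have hsub : J ∩ Set.Ioo (t - δ2) (t + δ2) ⊆ Set.ordConnectedComponent U t := by
      have hmem : t ∈ J ∩ Set.Ioo (t - δ2) (t + δ2) :=
        ⟨ht, by constructor <;> linarith⟩
      have hsubU : J ∩ Set.Ioo (t - δ2) (t + δ2) ⊆ U := by
        intro x hx
        apply hop x hx.1
        have := hx.2
        rw [Set.mem_Ioo] at this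
        rw [abs_lt]; constructor <;> linarith [this.1, this.2]
      exact Set.subset_ordConnectedComponent (h := hIooOC) hmem hsubU
    obtain ⟨δ1, hδ1, hp⟩ := (hliftC t htU).1 t (Set.self_mem_ordConnectedComponent.2 htU) ε hε
    refine ⟨min δ1 δ2, lt_min hδ1 hδ2, ?_⟩
    intro t' ht' habs i
    have habs2 := abs_lt.1 (lt_of_lt_of_le habs (min_le_right _ _))
    have ht'C : t' ∈ Set.ordConnectedComponent U t :=
      hsub ⟨ht', by constructor <;> linarith [habs2.1, habs2.2]⟩
    have ht'U : t' ∈ U := Set.ordConnectedComponent_subset ht'C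
    have hGt' : G t' = GC (Set.ordConnectedComponent U t) t' := by
      rw [hGU t' ht'U, hcompsame t htU t' ht'C]
    rw [hGU t htU, hGt']
    exact hp t' ht'C (lt_of_lt_of_le habs (min_le_left _ _)) i
  · obtain ⟨δ, hδ, hp⟩ := hOC t ht (ε/2) (by linarith)
    refine ⟨δ, hδ, ?_⟩
    intro t' ht' habs i
    obtain ⟨σ, hσ⟩ := hp t' ht' habs
    obtain ⟨σ', hσ'⟩ := horb t' ht'
    have htZ : t ∈ Z := by
      by_contra h2; exact htU ⟨ht, h2⟩
    rw [hGZ t htU, hσ' i]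
    have hkey := hσ (σ.symm (σ' i))
    rw [Equiv.apply_symm_apply] at hkey
    have hFeq : F t i = F t (σ.symm (σ' i)) := htZ.2 _ _
    rw [hFeq]
    linarith

end Lift5


/-- Finite-rank continuous enumeration: if `I ⊆ ℝ` is an interval and
`S : I → S_Φ(X, x₀)` is a continuous map of rank bounded by `n`, then there are
`n` continuous maps `λ_1, …, λ_n : I → X` with `S(t) = {λ_1(t), …, λ_n(t)}*`
for all `t ∈ I`. -/
theorem finiteRank_continuous_enumeration (x0 : X) (Φ : SymmetricNorm)
    (I : Set ℝ) (hI : I.OrdConnected) (S : I → X → ℕ∞)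
    (hS : ∀ t, MemSPhi Φ x0 (S t)) (n : ℕ)
    (hrank : ∀ t, ∃ k ≤ n, HasRank x0 (S t) k)
    (hcont : ∀ t : I, ∀ ε > 0, ∃ δ > 0, ∀ t' : I,
      |(t' : ℝ) - (t : ℝ)| < δ → dPhi Φ x0 (S t) (S t') < ε) :
    ∃ lam : Fin n → I → X, (∀ i, Continuous (lam i)) ∧
      ∀ t : I, ∀ x, x ≠ x0 → S t x = {i : Fin n | lam i t = x}.encard := by
  classical
  -- padded representatives
  have hpad : ∀ t : I, ∃ f : Fin n → X, ∀ x, x ≠ x0 → S t x = {i : Fin n | f i = x}.encard := by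
    intro t
    obtain ⟨k, hk, f0, hf0ne, hf0⟩ := hrank t
    refine ⟨fun i => if h : (i : ℕ) < k then f0 ⟨i, h⟩ else x0, ?_⟩
    intro x hx
    rw [hf0 x hx]
    have hset : {i : Fin n | (if h : (i : ℕ) < k then f0 ⟨i, h⟩ else x0) = x} =
        (Fin.castLE hk) '' {i : Fin k | f0 i = x} := by
      ext i
      simp only [Set.mem_setOf_eq, Set.mem_image]
      constructor
      · intro hi
        by_cases hlt : (i : ℕ) < k
        · rw [dif_pos hlt] at hi
          refine ⟨⟨i, hlt⟩, hi, ?_⟩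
          apply Fin.ext
          rfl
        · rw [dif_neg hlt] at hi
          exact absurd hi.symm hx
      · rintro ⟨i0, hi0, rfl⟩
        have hlt : ((Fin.castLE hk i0 : Fin n) : ℕ) < k := i0.isLt
        rw [dif_pos hlt]
        have : (⟨(Fin.castLE hk i0 : Fin n), hlt⟩ : Fin k) = i0 := by
          apply Fin.ext; rfl
        rw [this]
        exact hi0
    rw [hset, Set.InjOn.encard_image ((Fin.castLE_injective hk).injOn)]
  choose F0 hF0 using hpad
  set F : ℝ → Fin n → X := fun r => if h : r ∈ I then F0 ⟨r, h⟩ else fun _ => x0 with hF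
  have hFval : ∀ t : I, F (t : ℝ) = F0 t := by
    intro t
    rw [hF]
    simp only [dif_pos t.2]
  have hOC : OC I F := by
    intro t ht ε hε
    obtain ⟨δ, hδ, hp⟩ := hcont ⟨t, ht⟩ (ε/2) (by linarith)
    refine ⟨δ, hδ, ?_⟩
    intro t' ht' habs
    have hlt := hp ⟨t', ht'⟩ habs
    obtain ⟨k1, hk1, hR1⟩ := hrank ⟨t, ht⟩
    obtain ⟨k2, hk2, hR2⟩ := hrank ⟨t', ht'⟩
    obtain ⟨s, u, hsE, huE, hd⟩ := dPhi_lt_imp x0 Φ hR1 hR2 (by linarith : (0:ℝ) < ε/2) hlt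
    obtain ⟨σ, hσ⟩ := exists_close_perm x0 (F0 ⟨t, ht⟩) (F0 ⟨t', ht'⟩) s u (ε/2)
      (by linarith) (fun x hx => ((hF0 ⟨t, ht⟩ x hx).symm.trans (hsE x hx)))
      (fun x hx => ((hF0 ⟨t', ht'⟩ x hx).symm.trans (huE x hx))) hd
    refine ⟨σ, ?_⟩
    intro i
    rw [hFval ⟨t, ht⟩, hFval ⟨t', ht'⟩]
    have := hσ i
    linarith
  obtain ⟨G, hG⟩ := lift_exists n I hI F hOC
  refine ⟨fun i t => G (t : ℝ) i, ?_, ?_⟩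
  · intro i
    rw [Metric.continuous_iff]
    intro b ε hε
    obtain ⟨δ, hδ, hp⟩ := hG.1 (b : ℝ) b.2 ε hε
    refine ⟨δ, hδ, ?_⟩
    intro a hab
    have : |(a : ℝ) - (b : ℝ)| < δ := by
      rw [Subtype.dist_eq, Real.dist_eq] at hab
      exact hab
    have h2 := hp (a : ℝ) a.2 this i
    rw [dist_comm] at h2
    exact h2
  · intro t x hx
    obtain ⟨σ, hσ⟩ := hG.2 (t : ℝ) t.2
    have h1 : S t x = {i : Fin n | F (t : ℝ) i = x}.encard := by
      rw [hFval t] at *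
      exact hF0 t x hx
    rw [h1]
    have hset : {i : Fin n | F (t : ℝ) i = x} = (⇑σ) '' {i : Fin n | G (t : ℝ) i = x} := by
      ext i
      simp only [Set.mem_setOf_eq, Set.mem_image]
      constructor
      · intro hi
        refine ⟨σ.symm i, ?_, Equiv.apply_symm_apply σ i⟩
        rw [hσ (σ.symm i), Equiv.apply_symm_apply]
        exact hi
      · rintro ⟨j, hj, rfl⟩
        rw [← hσ j]
        exact hj
    rw [hset, Set.InjOn.encard_image (σ.injective.injOn)]
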